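/- The Pareto social choice correspondence Par admits an anonymous and neutral resolute refinement if and only if gcd(h, n!) = 1. -/

import Mathlib

/-!
Common framework: preferences on `n ≥ 2` alternatives (`Fin n`) expressed by `h ≥ 2`
individuals (`Fin h`).  Following the paper, a linear order `q ∈ L(N)` is identified with
the permutation of `Fin n` sending each rank position (`0` = best) to the alternative
occupying that position.
-/

/-- A preference relation (a linear order on the set `Fin n` of alternatives), identified
with the permutation sending each rank position (`0` = best) to the alternative at
that position. -/
abbrev Pref (n : ℕ) := Equiv.Perm (Fin n)

/-- `x ⪰_q y` : alternative `x` is weakly preferred to `y` in `q`. -/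
def prefGE {n : ℕ} (q : Pref n) (x y : Fin n) : Prop := q.symm x ≤ q.symm y

/-- `x ≻_q y` : alternative `x` is strictly preferred to `y` in `q`. -/
def prefGT {n : ℕ} (q : Pref n) (x y : Fin n) : Prop := q.symm x < q.symm y

instance {n : ℕ} (q : Pref n) (x y : Fin n) : Decidable (prefGT q x y) :=
  inferInstanceAs (Decidable (q.symm x < q.symm y))

/-- A preference profile: one preference relation for each individual. -/
abbrev Profile (n h : ℕ) := Fin h → Pref n

/-- A social choice correspondence (the nonemptiness of its values is `IsSCC`). -/
abbrev SCC (n h : ℕ) := Profile n h → Set (Fin n)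

/-- `C` has nonempty values, i.e. `C` really is a social choice correspondence. -/
def IsSCC {n h : ℕ} (C : SCC n h) : Prop := ∀ p, (C p).Nonempty

/-- `C` is resolute: it always selects exactly one alternative. -/
def Resolute {n h : ℕ} (C : SCC n h) : Prop := ∀ p, ∃ x, C p = {x}

/-- `C'` is a refinement of `C`. -/
def Refines {n h : ℕ} (C' C : SCC n h) : Prop := ∀ p, C' p ⊆ C p

/-- The order-reversing permutation `ρ₀ : r ↦ n - r + 1`. -/
def rho0 (n : ℕ) : Equiv.Perm (Fin n) := Fin.revPerm

/-- The profile `p^{(id,id,ρ₀)}` obtained from `p` by reversing every individual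
preference. -/
def revProfile {n h : ℕ} (p : Profile n h) : Profile n h := fun i => p i * rho0 n

/-- `C` is immune to the reversal bias. -/
def Immune {n h : ℕ} (C : SCC n h) : Prop :=
  ∀ (p : Profile n h) (x : Fin n), C p = {x} → C (revProfile p) ≠ C p

/-- `Y` is a partition: nonempty, pairwise disjoint, covering blocks. -/
def IsPartition {α : Type*} {s : ℕ} (Y : Fin s → Finset α) : Prop :=
  (∀ j, (Y j).Nonempty) ∧ (∀ j k, j ≠ k → Disjoint (Y j) (Y k)) ∧ (∀ a, ∃ j, a ∈ Y j)

/-- The Pareto social choice correspondence: `x` is selected iff no alternative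
unanimously beats it, i.e. for every other `y` some individual prefers `x` to `y`. -/
def Par {n h : ℕ} : SCC n h :=
  fun p => {x | ∀ y, y ≠ x → ∃ i, prefGT (p i) x y}

/-- The profile `p^{(φ,ψ,ρ)}`: individual `i` is renamed `φ(i)`, alternative `x` is
renamed `ψ(x)`, ranks are moved by `ρ`. -/
def pact {n h : ℕ} (φ : Equiv.Perm (Fin h)) (ψ ρ : Equiv.Perm (Fin n))
    (p : Profile n h) : Profile n h :=
  fun i => ψ * p (φ⁻¹ i) * ρ

/-- Anonymity with respect to the partition `Y` of the individuals. -/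
def YAnonymous {n h s : ℕ} (Y : Fin s → Finset (Fin h)) (C : SCC n h) : Prop :=
  ∀ (p : Profile n h) (φ : Equiv.Perm (Fin h)),
    (∀ j, (Y j).image φ = Y j) → C (pact φ 1 1 p) = C p

/-- Neutrality with respect to the partition `Z` of the alternatives. -/
def ZNeutral {n h t : ℕ} (Z : Fin t → Finset (Fin n)) (C : SCC n h) : Prop :=
  ∀ (p : Profile n h) (ψ : Equiv.Perm (Fin n)),
    (∀ k, (Z k).image ψ = Z k) → C (pact 1 ψ 1 p) = ψ '' C p

set_option maxHeartbeats 1000000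

namespace Moulin
open Equiv

variable {n h : ℕ}

lemma pact_one (p : Profile n h) : pact 1 1 1 p = p := by
  funext i; simp [pact]

lemma pact_mul (φ₁ φ₂ : Perm (Fin h)) (ψ₁ ψ₂ : Perm (Fin n)) (p : Profile n h) :
    pact φ₂ ψ₂ 1 (pact φ₁ ψ₁ 1 p) = pact (φ₂ * φ₁) (ψ₂ * ψ₁) 1 p := by
  funext i
  simp [pact, mul_assoc, mul_inv_rev, Equiv.Perm.mul_apply]

/-- The key stabilizer lemma: if `gcd h n! = 1` and `(φ, ψ)` stabilizes the profile `q`,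
then `ψ = 1`. -/
lemma psiKey (hg : Nat.gcd h (Nat.factorial n) = 1)
    {φ : Perm (Fin h)} {ψ : Perm (Fin n)} {q : Profile n h}
    (hs : pact φ ψ 1 q = q) : ψ = 1 := by
  have step : ∀ i, q (φ i) = ψ * q i := by
    intro i
    have h1 := congrFun hs (φ i)
    simp only [pact, mul_one, Equiv.Perm.inv_def, Equiv.symm_apply_apply] at h1
    exact h1.symm
  have powstep : ∀ (k : ℕ) (i : Fin h), q ((φ ^ k) i) = ψ ^ k * q i := by
    intro k
    induction k with
    | zero => intro i; simp
    | succ k ih =>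
      intro i
      have : (φ ^ (k + 1)) i = (φ ^ k) (φ i) := by
        rw [pow_succ, Equiv.Perm.mul_apply]
      rw [this, ih (φ i), step i, pow_succ, mul_assoc]
  have fixkey : ∀ (k : ℕ) (i : Fin h), (φ ^ k) i = i → ψ ^ k = 1 := by
    intro k i hk
    have h1 := powstep k i
    rw [hk] at h1
    have h2 : ψ ^ k * q i = 1 * q i := by rw [one_mul]; exact h1.symm
    exact mul_right_cancel h2
  by_cases hfix : ∃ i, φ i = i
  · obtain ⟨i, hi⟩ := hfix
    have := fixkey 1 i (by simpa using hi)
    simpa using this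
  · push_neg at hfix
    have hsupp : φ.support = Finset.univ := by
      ext i; simp [Equiv.Perm.mem_support, hfix i]
    have hdvd_h : orderOf ψ ∣ h := by
      have hsum : φ.cycleType.sum = h := by
        rw [Equiv.Perm.sum_cycleType, hsupp, Finset.card_univ, Fintype.card_fin]
      rw [← hsum]
      apply Multiset.dvd_sum
      intro ℓ hℓ
      rw [Equiv.Perm.cycleType_def, Multiset.mem_map] at hℓ
      obtain ⟨c, hc, rfl⟩ := hℓ
      simp only [Function.comp_apply]
      rw [← Finset.mem_def] at hc
      have hcyc := (Equiv.Perm.mem_cycleFactorsFinset_iff.mp hc).1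
      obtain ⟨a, ha⟩ : c.support.Nonempty := by
        rw [← Finset.card_pos]
        have := hcyc.two_le_card_support
        omega
      have hceq : c = φ.cycleOf a := Equiv.Perm.cycle_is_cycleOf ha hc
      have horder : orderOf c = c.support.card := hcyc.orderOf
      have hfixa : (φ ^ c.support.card) a = a := by
        have h1 : (c ^ c.support.card) a = a := by
          rw [← horder, pow_orderOf_eq_one]; rfl
        have h2 : ((φ.cycleOf a) ^ c.support.card) a = (φ ^ c.support.card) a :=
          Equiv.Perm.cycleOf_pow_apply_self φ a _
        rw [← hceq] at h2
        rw [← h2]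
        exact h1
      exact orderOf_dvd_of_pow_eq_one (fixkey _ a hfixa)
    have hdvd_f : orderOf ψ ∣ Nat.factorial n := by
      have := orderOf_dvd_card (x := ψ)
      simpa [Fintype.card_perm, Fintype.card_fin] using this
    have h1 : orderOf ψ ∣ 1 := hg ▸ Nat.dvd_gcd hdvd_h hdvd_f
    rw [← orderOf_eq_one_iff]
    exact Nat.dvd_one.mp h1

end Moulin
namespace Moulin
open Equiv

variable {n h : ℕ}

/-- The orbit equivalence relation on profiles. -/
def rel (p q : Profile n h) : Prop := ∃ φ ψ, pact φ ψ 1 p = q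

lemma rel_refl (p : Profile n h) : rel p p := ⟨1, 1, pact_one p⟩

lemma rel_symm {p q : Profile n h} : rel p q → rel q p := by
  rintro ⟨φ, ψ, rfl⟩
  exact ⟨φ⁻¹, ψ⁻¹, by rw [pact_mul, inv_mul_cancel, inv_mul_cancel, pact_one]⟩

lemma rel_trans {p q r : Profile n h} : rel p q → rel q r → rel p r := by
  rintro ⟨φ₁, ψ₁, rfl⟩ ⟨φ₂, ψ₂, rfl⟩
  exact ⟨φ₂ * φ₁, ψ₂ * ψ₁, (pact_mul ..).symm⟩

def relSetoid (n h : ℕ) : Setoid (Profile n h) :=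
  ⟨rel, fun p => rel_refl p, rel_symm, rel_trans⟩

/-- A canonical representative of the orbit of a profile. -/
noncomputable def rep (p : Profile n h) : Profile n h :=
  (Quotient.mk (relSetoid n h) p).out

lemma rep_rel (p : Profile n h) : rel (rep p) p :=
  Quotient.exact (s := relSetoid n h) (Quotient.out_eq _)

lemma rep_congr {p q : Profile n h} (hpq : rel p q) : rep p = rep q := by
  unfold rep
  rw [Quotient.sound (s := relSetoid n h) hpq]

noncomputable def thePhi (p : Profile n h) : Perm (Fin h) := (rep_rel p).choose

noncomputable def thePsi (p : Profile n h) : Perm (Fin n) :=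
  (rep_rel p).choose_spec.choose

lemma thePsi_spec (p : Profile n h) : pact (thePhi p) (thePsi p) 1 (rep p) = p :=
  (rep_rel p).choose_spec.choose_spec

lemma psi_unique (hg : Nat.gcd h (Nat.factorial n) = 1)
    {q : Profile n h} {φ₁ φ₂ : Perm (Fin h)} {ψ₁ ψ₂ : Perm (Fin n)}
    (h12 : pact φ₁ ψ₁ 1 q = pact φ₂ ψ₂ 1 q) : ψ₁ = ψ₂ := by
  have hstab : pact (φ₂⁻¹ * φ₁) (ψ₂⁻¹ * ψ₁) 1 q = q := by
    rw [← pact_mul, h12, pact_mul, inv_mul_cancel, inv_mul_cancel, pact_one]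
  have := psiKey hg hstab
  exact (inv_mul_eq_one.mp this).symm

/-- Pareto equivariance. -/
lemma mem_par_pact {q : Profile n h} {φ : Perm (Fin h)} {ψ : Perm (Fin n)} {x : Fin n} :
    x ∈ Par (pact φ ψ 1 q) ↔ ψ⁻¹ x ∈ Par q := by
  have key : ∀ (i : Fin h) (z : Fin n),
      prefGT (pact φ ψ 1 q i) x z ↔ prefGT (q (φ⁻¹ i)) (ψ⁻¹ x) (ψ⁻¹ z) := by
    intro i z
    simp only [pact, mul_one, prefGT, Equiv.Perm.mul_apply]
    rfl
  constructor
  · intro H y hy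
    obtain ⟨i, hi⟩ := H (ψ y) (by
      intro hc
      apply hy
      rw [← hc]
      simp)
    refine ⟨φ⁻¹ i, ?_⟩
    have := (key i (ψ y)).mp hi
    simpa using this
  · intro H y hy
    obtain ⟨i, hi⟩ := H (ψ⁻¹ y) (by
      intro hc
      apply hy
      have := congrArg ψ hc
      simpa using this)
    refine ⟨φ i, ?_⟩
    rw [key (φ i) y]
    simpa using hi

lemma par_pact (q : Profile n h) (φ : Perm (Fin h)) (ψ : Perm (Fin n)) :
    Par (pact φ ψ 1 q) = ψ '' Par q := by
  ext x
  rw [Set.mem_image]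
  constructor
  · intro hx
    exact ⟨ψ⁻¹ x, mem_par_pact.mp hx, by simp⟩
  · rintro ⟨a, ha, rfl⟩
    rw [mem_par_pact]
    simpa using ha

/-- The favorite alternative of individual `0` is Pareto optimal. -/
lemma base_mem_par [NeZero n] [NeZero h] (q : Profile n h) : q 0 0 ∈ Par q := by
  intro y hy
  refine ⟨0, ?_⟩
  unfold prefGT
  rw [Equiv.symm_apply_apply]
  have : (q 0).symm y ≠ 0 := by
    intro hc
    apply hy
    have := congrArg (q 0) hc
    simpa using this
  exact (Fin.pos_iff_ne_zero' _).mpr this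

end Moulin
namespace Moulin
open Equiv

variable {n h : ℕ}

lemma gcd_eq_one (hh : 2 ≤ h) (hn : 2 ≤ n)
    (H : ∃ C : SCC n h, Resolute C ∧ Refines C Par ∧
        (∀ (p : Profile n h) (φ : Equiv.Perm (Fin h)), C (pact φ 1 1 p) = C p) ∧
        (∀ (p : Profile n h) (ψ : Equiv.Perm (Fin n)), C (pact 1 ψ 1 p) = ψ '' C p)) :
    Nat.gcd h (Nat.factorial n) = 1 := by
  by_contra hg
  obtain ⟨C, hres, href, hanon, hneut⟩ := H
  set g := Nat.gcd h (Nat.factorial n) with hgdef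
  have hprime : Nat.Prime g.minFac := Nat.minFac_prime hg
  set pp := g.minFac with hppdef
  have hph : pp ∣ h := dvd_trans (Nat.minFac_dvd g) (Nat.gcd_dvd_left _ _)
  have hpf : pp ∣ Nat.factorial n := dvd_trans (Nat.minFac_dvd g) (Nat.gcd_dvd_right _ _)
  have hpn : pp ≤ n := (Nat.Prime.dvd_factorial hprime).mp hpf
  have hp2 : 2 ≤ pp := hprime.two_le
  haveI : NeZero pp := ⟨by omega⟩
  haveI : NeZero h := ⟨by omega⟩
  haveI : NeZero n := ⟨by omega⟩
  -- the cyclic permutation of the first `pp` alternatives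
  set c : Perm (Fin pp) := Equiv.addLeft (1 : Fin pp) with hcdef
  set e : Fin pp ≃ {x : Fin n // (x : ℕ) < pp} :=
    { toFun := fun a => ⟨⟨(a : ℕ), lt_of_lt_of_le a.2 hpn⟩, a.2⟩
      invFun := fun x => ⟨(x.1 : ℕ), x.2⟩
      left_inv := fun a => rfl
      right_inv := fun x => rfl } with hedef
  set ψ : Perm (Fin n) := Equiv.Perm.extendDomain c e with hψdef
  have hpow : ∀ k : ℕ, ψ ^ k = Equiv.Perm.extendDomain (c ^ k) e := by
    intro k
    rw [hψdef, Equiv.Perm.extendDomain_pow]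
  open Fin.NatCast in
  have hcpow : ∀ k : ℕ, c ^ k = Equiv.addLeft ((k : Fin pp)) := by
    intro k
    induction k with
    | zero => exact Equiv.ext fun x => by simp
    | succ k ih =>
      rw [pow_succ, ih, hcdef]
      refine Equiv.ext fun x => ?_
      simp only [Equiv.Perm.mul_apply, coe_addLeft, Nat.cast_succ]
      abel
  have hψp : ψ ^ pp = 1 := by
    rw [hpow, hcpow, Fin.natCast_self, addLeft_zero, Equiv.Perm.extendDomain_one]
  have hmod : ∀ a b : ℕ, a % pp = b % pp → ψ ^ a = ψ ^ b := by
    intro a b hab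
    have hdvd : orderOf ψ ∣ pp := orderOf_dvd_of_pow_eq_one hψp
    exact pow_eq_pow_iff_modEq.mpr (Nat.ModEq.of_dvd hdvd hab)
  -- facts about ψ^k
  have hfixbig : ∀ (k : ℕ) (x : Fin n), ¬ ((x : ℕ) < pp) → (ψ ^ k) x = x := by
    intro k x hx
    rw [hpow]
    exact Equiv.Perm.extendDomain_apply_not_subtype _ _ hx
  have hsmall : ∀ (k : ℕ) (x : Fin n), (x : ℕ) < pp → (((ψ ^ k) x : Fin n) : ℕ) < pp := by
    intro k x hx
    rw [hpow, Equiv.Perm.extendDomain_apply_subtype (p := fun z : Fin n => (z : ℕ) < pp) (c ^ k) e hx]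
    exact (e ((c ^ k) (e.symm ⟨x, hx⟩))).2
  -- the cyclic profile
  set q : Profile n h := fun i => ψ ^ (i : ℕ) with hqdef
  set φ : Perm (Fin h) := (Equiv.addLeft (-1 : Fin h))⁻¹ with hφdef
  have hstab : pact φ ψ 1 q = q := by
    funext i
    show ψ * q (φ⁻¹ i) * 1 = q i
    rw [mul_one, hφdef, inv_inv]
    show ψ * ψ ^ ((Equiv.addLeft (-1 : Fin h) i : Fin h) : ℕ) = ψ ^ (i : ℕ)
    rw [← pow_succ']
    apply hmod
    have hv1 : ((-1 : Fin h) : ℕ) = h - 1 := by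
      rw [Fin.coe_neg, Fin.val_one', Nat.mod_eq_of_lt (show 1 < h by omega)]
      exact Nat.mod_eq_of_lt (by omega)
    have hval : ((Equiv.addLeft (-1 : Fin h) i : Fin h) : ℕ) = ((h - 1) + (i : ℕ)) % h := by
      show ((-1 + i : Fin h) : ℕ) = _
      rw [Fin.add_def, hv1]
    rw [hval]
    obtain ⟨m, hm⟩ := hph
    have hi : (i : ℕ) < h := i.2
    rcases Nat.eq_zero_or_pos (i : ℕ) with h0 | h0
    · rw [h0]
      have : (h - 1 + 0) % h = h - 1 := by
        rw [Nat.add_zero]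
        exact Nat.mod_eq_of_lt (by omega)
      rw [this]
      have : (h - 1) + 1 = h := by omega
      rw [this, Nat.zero_mod, hm, Nat.mul_mod_right]
    · have h1 : h - 1 + (i : ℕ) = ((i : ℕ) - 1) + h := by omega
      rw [h1, Nat.add_mod_right, Nat.mod_eq_of_lt (show (i : ℕ) - 1 < h by omega)]
      congr 1
      omega
  -- derive the contradiction
  obtain ⟨x, hx⟩ := hres q
  have hchain : C q = ψ '' C q := by
    have e1 : pact 1 ψ 1 (pact φ 1 1 q) = q := by
      rw [pact_mul, one_mul, mul_one, hstab]
    calc C q = C (pact 1 ψ 1 (pact φ 1 1 q)) := by rw [e1]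
    _ = ψ '' C (pact φ 1 1 q) := hneut _ _
    _ = ψ '' C q := by rw [hanon]
  have hψx : ψ x = x := by
    rw [hx, Set.image_singleton] at hchain
    exact (Set.singleton_eq_singleton_iff.mp hchain).symm
  have hxpar : x ∈ Par q := href q (by rw [hx]; rfl)
  -- x must be among the first pp alternatives
  have hxsmall : (x : ℕ) < pp := by
    by_contra hxbig
    set y : Fin n := ⟨0, by omega⟩ with hydef
    have hyx : y ≠ x := by
      intro hc
      rw [← hc] at hxbig
      simp [hydef] at hxbig
      omega
    obtain ⟨i, hi⟩ := hxpar y hyx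
    unfold prefGT at hi
    have hqx : (q i).symm x = x := by
      rw [Equiv.symm_apply_eq]
      exact (hfixbig (i : ℕ) x hxbig).symm
    have hqy : (((q i).symm y : Fin n) : ℕ) < pp := by
      by_contra hzbig
      have := hfixbig (i : ℕ) ((q i).symm y) hzbig
      rw [hqdef] at this
      have h2 : y = (q i).symm y := by
        conv_lhs => rw [← Equiv.apply_symm_apply (q i) y]
        rw [hqdef]
        exact this
      rw [← h2] at hzbig
      simp [hydef] at hzbig
      omega
    rw [hqx] at hi
    have := Fin.lt_def.mp hi
    omega
  -- but ψ moves every small alternative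
  have hmove : ψ x ≠ x := by
    have happ : ψ x = ((e (c (e.symm ⟨x, hxsmall⟩))) : Fin n) := by
      rw [hψdef]
      exact Equiv.Perm.extendDomain_apply_subtype (p := fun z : Fin n => (z : ℕ) < pp) c e hxsmall
    have hval : ((ψ x : Fin n) : ℕ) = (1 + (x : ℕ)) % pp := by
      rw [happ]
      show (((1 : Fin pp) + ⟨(x : ℕ), hxsmall⟩ : Fin pp) : ℕ) = (1 + (x : ℕ)) % pp
      rw [Fin.add_def, Fin.val_one']
      rw [Nat.mod_eq_of_lt (show 1 < pp by omega)]
    intro hc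
    rw [hc] at hval
    rcases Nat.lt_or_ge (1 + (x : ℕ)) pp with hlt | hge
    · rw [Nat.mod_eq_of_lt hlt] at hval
      omega
    · have : 1 + (x : ℕ) = pp := by omega
      rw [this, Nat.mod_self] at hval
      omega
  exact hmove hψx

end Moulin
namespace Moulin
open Equiv

variable {n h : ℕ}

lemma exists_refinement (hh : 2 ≤ h) (hn : 2 ≤ n)
    (hg : Nat.gcd h (Nat.factorial n) = 1) :
    ∃ C : SCC n h, Resolute C ∧ Refines C Par ∧
      (∀ (p : Profile n h) (φ : Equiv.Perm (Fin h)), C (pact φ 1 1 p) = C p) ∧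
      (∀ (p : Profile n h) (ψ : Equiv.Perm (Fin n)), C (pact 1 ψ 1 p) = ψ '' C p) := by
  haveI : NeZero n := ⟨by omega⟩
  haveI : NeZero h := ⟨by omega⟩
  refine ⟨fun p => {thePsi p (rep p 0 0)}, fun p => ⟨_, rfl⟩, ?_, ?_, ?_⟩
  · -- refines Par
    intro p x hx
    rw [Set.mem_singleton_iff] at hx
    subst hx
    have h1 : Par p = thePsi p '' Par (rep p) := by
      conv_lhs => rw [← thePsi_spec p]
      rw [par_pact]
    rw [h1]
    exact ⟨_, base_mem_par (rep p), rfl⟩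
  · -- anonymity
    intro p φ
    have hrel : rel p (pact φ 1 1 p) := ⟨φ, 1, rfl⟩
    have hrep : rep (pact φ 1 1 p) = rep p := (rep_congr hrel).symm
    have hψ : thePsi (pact φ 1 1 p) = thePsi p := by
      have s1 := thePsi_spec (pact φ 1 1 p)
      rw [hrep] at s1
      have s3 : pact (φ * thePhi p) (1 * thePsi p) 1 (rep p) = pact φ 1 1 p := by
        rw [← pact_mul, thePsi_spec p]
      have := psi_unique hg (s1.trans s3.symm)
      simpa using this
    show ({thePsi (pact φ 1 1 p) (rep (pact φ 1 1 p) 0 0)} : Set (Fin n)) = _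
    rw [hrep, hψ]
  · -- neutrality
    intro p ψ
    have hrel : rel p (pact 1 ψ 1 p) := ⟨1, ψ, rfl⟩
    have hrep : rep (pact 1 ψ 1 p) = rep p := (rep_congr hrel).symm
    have hψ : thePsi (pact 1 ψ 1 p) = ψ * thePsi p := by
      have s1 := thePsi_spec (pact 1 ψ 1 p)
      rw [hrep] at s1
      have s3 : pact (1 * thePhi p) (ψ * thePsi p) 1 (rep p) = pact 1 ψ 1 p := by
        rw [← pact_mul, thePsi_spec p]
      exact psi_unique hg (s1.trans s3.symm)
    show ({thePsi (pact 1 ψ 1 p) (rep (pact 1 ψ 1 p) 0 0)} : Set (Fin n)) = _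
    rw [hrep, hψ, Set.image_singleton]
    rfl

end Moulin

/-- Moulin's theorem: the Pareto scc admits an anonymous and neutral
resolute refinement if and only if `gcd(h, n!) = 1`. -/
theorem statement4 {h n : ℕ} (hh : 2 ≤ h) (hn : 2 ≤ n) :
    (∃ C : SCC n h, Resolute C ∧ Refines C Par ∧
        (∀ (p : Profile n h) (φ : Equiv.Perm (Fin h)), C (pact φ 1 1 p) = C p) ∧
        (∀ (p : Profile n h) (ψ : Equiv.Perm (Fin n)), C (pact 1 ψ 1 p) = ψ '' C p)) ↔
      Nat.gcd h (Nat.factorial n) = 1 := by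
  exact ⟨Moulin.gcd_eq_one hh hn, Moulin.exists_refinement hh hn⟩
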